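/- Let z₁, z₂, Q, J₁₀, J₂₀, c₁₀^{a,m} ∈ ℝ with z₁ ≠ 0, z₂ ≠ 0, z₁ ≠ z₂, I₀ := z₁J₁₀ + z₂J₂₀, T₀ := J₁₀ + J₂₀ ≠ 0. Let c₁₀(y) := e^{z₁z₂T₀y}·c₁₀^{a,m} + (J₁₀Q/(z₁T₀))·(e^{z₁z₂T₀y} − 1) and σ(y) := (z₁ − z₂)z₁c₁₀(y) − z₂Q, and suppose σ(s) > 0 for all s ∈ [0, y]. Then ∫₀^y z₁I₀c₁₀(s)/σ(s) ds = J₁₀·y + (ln σ(y) − ln σ(0))/(z₁(z₁ − z₂)). -/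

import Mathlib

/-- Identity (3.41) for `S_z = ∫₀^y z₁I₀c₁₀(s)/σ(s) ds` on the middle
subinterval with nonzero constant permanent charge `Q`. -/
theorem integral_identity_Sz_middle
    (z₁ z₂ Q J₁₀ J₂₀ c₁₀am y : ℝ)
    (hz₁ : z₁ ≠ 0) (hz₂ : z₂ ≠ 0) (hz₁₂ : z₁ ≠ z₂)
    (I₀ T₀ : ℝ) (hI₀ : I₀ = z₁ * J₁₀ + z₂ * J₂₀) (hT₀ : T₀ = J₁₀ + J₂₀)
    (hT₀ne : T₀ ≠ 0)
    (c₁₀ σ : ℝ → ℝ)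
    (hc₁₀ : ∀ s, c₁₀ s = Real.exp (z₁ * z₂ * T₀ * s) * c₁₀am +
      (J₁₀ * Q / (z₁ * T₀)) * (Real.exp (z₁ * z₂ * T₀ * s) - 1))
    (hσ : ∀ s, σ s = (z₁ - z₂) * z₁ * c₁₀ s - z₂ * Q)
    (hy : 0 ≤ y) (hσpos : ∀ s ∈ Set.Icc 0 y, 0 < σ s) :
    (∫ s in (0 : ℝ)..y, z₁ * I₀ * c₁₀ s / σ s) =
      J₁₀ * y + (Real.log (σ y) - Real.log (σ 0)) / (z₁ * (z₁ - z₂)) := by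
  have hsub : z₁ - z₂ ≠ 0 := sub_ne_zero.mpr hz₁₂
  set k : ℝ := z₁ * z₂ * T₀ with hk
  -- derivative of c₁₀
  have hc₁₀' : ∀ s : ℝ, HasDerivAt c₁₀ (k * c₁₀ s + z₂ * Q * J₁₀) s := by
    intro s
    have he : HasDerivAt (fun t : ℝ => Real.exp (k * t)) (Real.exp (k * s) * k) s := by
      simpa using ((hasDerivAt_id s).const_mul k).exp
    have h1 : HasDerivAt (fun t : ℝ => Real.exp (k * t) * c₁₀am +
        (J₁₀ * Q / (z₁ * T₀)) * (Real.exp (k * t) - 1))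
        (Real.exp (k * s) * k * c₁₀am + (J₁₀ * Q / (z₁ * T₀)) * (Real.exp (k * s) * k)) s :=
      (he.mul_const c₁₀am).add (((he.sub_const 1)).const_mul (J₁₀ * Q / (z₁ * T₀)))
    have heq : (fun t : ℝ => Real.exp (k * t) * c₁₀am +
        (J₁₀ * Q / (z₁ * T₀)) * (Real.exp (k * t) - 1)) = c₁₀ := by
      funext t; rw [hc₁₀ t]
    rw [heq] at h1
    convert h1 using 1
    rw [hc₁₀ s, hk]
    field_simp
    ring
  have hσ' : ∀ s : ℝ, HasDerivAt σ ((z₁ - z₂) * z₁ * (k * c₁₀ s + z₂ * Q * J₁₀)) s := by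
    intro s
    have h : HasDerivAt (fun t => (z₁ - z₂) * z₁ * c₁₀ t - z₂ * Q)
        ((z₁ - z₂) * z₁ * (k * c₁₀ s + z₂ * Q * J₁₀)) s :=
      (((hc₁₀' s).const_mul ((z₁ - z₂) * z₁)).sub_const (z₂ * Q))
    have heq : (fun t => (z₁ - z₂) * z₁ * c₁₀ t - z₂ * Q) = σ := by
      funext t; rw [hσ t]
    rwa [heq] at h
  -- continuity of c₁₀ and σ
  have hexpc : Continuous fun t : ℝ => Real.exp (k * t) :=
    Real.continuous_exp.comp (continuous_const.mul continuous_id)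
  have hc₁₀c : Continuous c₁₀ := by
    have h : Continuous (fun t : ℝ => Real.exp (k * t) * c₁₀am +
        (J₁₀ * Q / (z₁ * T₀)) * (Real.exp (k * t) - 1)) :=
      (hexpc.mul continuous_const).add
        (continuous_const.mul (hexpc.sub continuous_const))
    convert h using 1; funext t; rw [hc₁₀ t]
  have hσc : Continuous σ := by
    have h : Continuous (fun t => (z₁ - z₂) * z₁ * c₁₀ t - z₂ * Q) :=
      (continuous_const.mul hc₁₀c).sub continuous_const
    convert h using 1; funext t; rw [hσ t]
  have huIcc : Set.uIcc 0 y = Set.Icc 0 y := Set.uIcc_of_le hy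
  have hσne : ∀ s ∈ Set.uIcc (0:ℝ) y, σ s ≠ 0 := by
    intro s hs; rw [huIcc] at hs; exact (hσpos s hs).ne'
  -- the antiderivative
  have hF : ∀ s ∈ Set.uIcc (0:ℝ) y,
      HasDerivAt (fun t => J₁₀ * t + Real.log (σ t) / (z₁ * (z₁ - z₂)))
        (z₁ * I₀ * c₁₀ s / σ s) s := by
    intro s hs
    have hne := hσne s hs
    have hlog : HasDerivAt (fun t => Real.log (σ t))
        ((z₁ - z₂) * z₁ * (k * c₁₀ s + z₂ * Q * J₁₀) / σ s) s :=
      (hσ' s).log hne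
    have h1 : HasDerivAt (fun t => J₁₀ * t + Real.log (σ t) / (z₁ * (z₁ - z₂)))
        (J₁₀ * 1 + ((z₁ - z₂) * z₁ * (k * c₁₀ s + z₂ * Q * J₁₀) / σ s) / (z₁ * (z₁ - z₂))) s :=
      ((hasDerivAt_id s).const_mul J₁₀).add (hlog.div_const _)
    convert h1 using 1
    have hne' : (z₁ - z₂) * z₁ * c₁₀ s - z₂ * Q ≠ 0 := by rw [← hσ s]; exact hne
    rw [hI₀, hk, hT₀]
    field_simp
    rw [hσ s]
    ring
  -- integrability
  have hint : IntervalIntegrable (fun s => z₁ * I₀ * c₁₀ s / σ s) MeasureTheory.volume 0 y := by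
    apply ContinuousOn.intervalIntegrable
    exact ContinuousOn.div ((continuous_const.mul hc₁₀c).continuousOn)
      hσc.continuousOn hσne
  have key := intervalIntegral.integral_eq_sub_of_hasDerivAt (fun s hs => hF s hs) hint
  rw [key]
  ring
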